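/- Every product integral is invertible, and its inverse is obtained by reversing the limits: (∏_s^t (I + A(x) dx))^{-1} = ∏_t^s (I + A(x) dx). -/

import Mathlib

open Matrix MeasureTheory Set

attribute [local instance] Matrix.linftyOpNormedRing Matrix.linftyOpNormedAlgebra

private lemma ode_uniq {p : ℕ} (A : ℝ → Matrix (Fin p) (Fin p) ℝ) (hA : Continuous A)
    (f g : ℝ → Matrix (Fin p) (Fin p) ℝ)
    (hf' : ∀ t, HasDerivAt f (f t * A t) t)
    (hg' : ∀ t, HasDerivAt g (g t * A t) t)
    (t₀ : ℝ) (heq : f t₀ = g t₀) : ∀ u, f u = g u := by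
  intro u
  set a : ℝ := min t₀ u - 1 with ha
  set b : ℝ := max t₀ u + 1 with hb
  have hab : a < b := by
    have h1 : min t₀ u ≤ max t₀ u := le_trans (min_le_left _ _) (le_max_left _ _)
    linarith
  -- bound of A on Icc a b
  obtain ⟨C, hC⟩ : ∃ C : ℝ, ∀ x ∈ Icc a b, ‖A x‖ ≤ C :=
    (isCompact_Icc.exists_bound_of_continuousOn hA.continuousOn)
  have hC0 : 0 ≤ C := le_trans (norm_nonneg _) (hC a ⟨le_refl a, le_of_lt hab⟩)
  set K : NNReal := ⟨C, hC0⟩ with hK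
  -- the clamped vector field
  set v : ℝ → Matrix (Fin p) (Fin p) ℝ → Matrix (Fin p) (Fin p) ℝ :=
    fun t x => x * A (projIcc a b hab.le t) with hv
  have hlip : ∀ t, LipschitzOnWith K (v t) univ := by
    intro t
    rw [lipschitzOnWith_iff_dist_le_mul]
    intro x _ y _
    rw [dist_eq_norm, dist_eq_norm]
    have hd : v t x - v t y = (x - y) * A (projIcc a b hab.le t) := by
      simp [hv, sub_mul]
    rw [hd]
    calc ‖(x - y) * A (projIcc a b hab.le t)‖
        ≤ ‖x - y‖ * ‖A (projIcc a b hab.le t)‖ := norm_mul_le _ _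
      _ ≤ ‖x - y‖ * C := by
          gcongr
          exact hC _ (projIcc a b hab.le t).2
      _ = (K : ℝ) * ‖x - y‖ := by rw [mul_comm]; rfl
  have ht₀ : t₀ ∈ Ioo a b := by
    constructor
    · have := min_le_left t₀ u; linarith
    · have := le_max_left t₀ u; linarith
  have hu : u ∈ Icc a b := by
    constructor
    · have := min_le_right t₀ u; linarith
    · have := le_max_right t₀ u; linarith
  have key := ODE_solution_unique_of_mem_Icc (v := v) (s := fun _ => univ) (fun t _ => hlip t) ht₀
    (fun x _ => (hf' x).continuousAt.continuousWithinAt)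
    (fun t ht => by
      have : v t (f t) = f t * A t := by
        simp [hv, projIcc_of_mem hab.le (Ioo_subset_Icc_self ht)]
      rw [this]; exact hf' t)
    (fun _ _ => mem_univ _)
    (fun x _ => (hg' x).continuousAt.continuousWithinAt)
    (fun t ht => by
      have : v t (g t) = g t * A t := by
        simp [hv, projIcc_of_mem hab.le (Ioo_subset_Icc_self ht)]
      rw [this]; exact hg' t)
    (fun _ _ => mem_univ _)
    heq
  exact key hu

/-- Every product integral is invertible, and its inverse is obtained by
reversing the limits of integration: `(∏_s^t (I + A(x) dx))⁻¹ = ∏_t^s (I + A(x) dx)`.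
Here `F (s, t)` denotes the product integral, i.e. the solution of
`∂/∂t F (s, t) = F (s, t) * A t`, `F (s, s) = 1`, defined for all real `s`, `t`. -/
theorem productIntegral_inverse_reverse {p : ℕ}
    (A : ℝ → Matrix (Fin p) (Fin p) ℝ) (hA : Continuous A)
    (F : ℝ → ℝ → Matrix (Fin p) (Fin p) ℝ)
    (hF : ∀ s t : ℝ, HasDerivAt (fun u => F s u) (F s t * A t) t)
    (hF0 : ∀ s : ℝ, F s s = 1) :
    ∀ s t : ℝ, IsUnit (F s t) ∧ F s t * F t s = 1 ∧ F t s * F s t = 1 := by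
  have main : ∀ s t : ℝ, F s t * F t s = 1 := by
    intro s t
    have huniq := ode_uniq A hA (fun u => F s u) (fun u => F s t * F t u)
      (hF s)
      (fun u => by
        have := (hF t u).const_mul (F s t)
        rw [mul_assoc]; exact this)
      t (by simp [hF0])
    have := (huniq s).symm
    simpa [hF0] using this
  intro s t
  refine ⟨⟨⟨F s t, F t s, main s t, main t s⟩, rfl⟩, main s t, main t s⟩
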